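/- Let Φ : ℝ^N → ℝ^m be a linear map, let 1 ≤ p < ∞, let s be a positive integer with s ≤ N, let μ > 0 and 0 ≤ δ < 1/3, and suppose ‖Φz‖_{ℓp} ≤ μ(1+δ)‖z‖_{ℓ2} for every z ∈ ℝ^N with at most s nonzero entries. Let x ∈ ℝ^N satisfy ‖Φx‖_{ℓp} < (1/3 − δ)μ‖x‖_{ℓ2} and ‖x‖_{ℓ2} > (3/√s)‖x‖_{ℓ1}, and let S ⊆ {1,…,N} be a set of indices of the s largest-in-absolute-value entries of x (|S| = s and |x_j| ≤ |x_i| for every i ∈ S, j ∉ S). Then ‖x‖_{ℓ2} < (3/2)‖x_S‖_{ℓ2} and ‖Φx_S‖_{ℓp} < (1 − δ)μ‖x_S‖_{ℓ2}. -/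

import Mathlib

open Finset

/-- The ℓp norm of a vector in ℝ^m, for real `p`. -/
noncomputable def lpNorm {m : ℕ} (p : ℝ) (u : Fin m → ℝ) : ℝ :=
  (∑ i, |u i| ^ p) ^ (1 / p)

/-- The ℓ1 norm of a vector in ℝ^N. -/
noncomputable def l1Norm {N : ℕ} (v : Fin N → ℝ) : ℝ :=
  ∑ j, |v j|

/-- The ℓ2 norm of a vector in ℝ^N. -/
noncomputable def l2Norm {N : ℕ} (v : Fin N → ℝ) : ℝ :=
  Real.sqrt (∑ j, (v j) ^ 2)

/-- The restriction of a vector to a set of coordinates (zero outside the set). -/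
def restrictVec {N : ℕ} (S : Finset (Fin N)) (v : Fin N → ℝ) : Fin N → ℝ :=
  fun j => if j ∈ S then v j else 0

lemma l1Norm_nonneg {N : ℕ} (v : Fin N → ℝ) : 0 ≤ l1Norm v :=
  Finset.sum_nonneg fun _ _ => abs_nonneg _

lemma l2Norm_nonneg {N : ℕ} (v : Fin N → ℝ) : 0 ≤ l2Norm v := Real.sqrt_nonneg _

lemma lpNorm_nonneg {m : ℕ} (p : ℝ) (u : Fin m → ℝ) : 0 ≤ lpNorm p u :=
  Real.rpow_nonneg (Finset.sum_nonneg fun _ _ =>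
    Real.rpow_nonneg (abs_nonneg _) _) _

lemma lpNorm_add_le {m : ℕ} {p : ℝ} (hp : 1 ≤ p) (u v : Fin m → ℝ) :
    lpNorm p (u + v) ≤ lpNorm p u + lpNorm p v := by
  have h := Real.Lp_add_le Finset.univ u v hp
  simpa [lpNorm, Pi.add_apply] using h

lemma lpNorm_neg {m : ℕ} (p : ℝ) (u : Fin m → ℝ) : lpNorm p (-u) = lpNorm p u := by
  simp [lpNorm, Pi.neg_apply, abs_neg]

lemma lpNorm_sub_le {m : ℕ} {p : ℝ} (hp : 1 ≤ p) (u v : Fin m → ℝ) :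
    lpNorm p (u - v) ≤ lpNorm p u + lpNorm p v := by
  rw [sub_eq_add_neg]
  calc lpNorm p (u + -v) ≤ lpNorm p u + lpNorm p (-v) := lpNorm_add_le hp u (-v)
  _ = lpNorm p u + lpNorm p v := by rw [lpNorm_neg]

lemma restrict_add_compl {N : ℕ} (S : Finset (Fin N)) (v : Fin N → ℝ) :
    restrictVec S v + restrictVec Sᶜ v = v := by
  funext j
  by_cases h : j ∈ S <;> simp [restrictVec, h]

lemma l1Norm_split {N : ℕ} (S : Finset (Fin N)) (v : Fin N → ℝ) :
    l1Norm (restrictVec S v) + l1Norm (restrictVec Sᶜ v) = l1Norm v := by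
  unfold l1Norm
  rw [← Finset.sum_add_distrib]
  apply Finset.sum_congr rfl
  intro j _
  by_cases h : j ∈ S <;> simp [restrictVec, h]

lemma l2sq_split {N : ℕ} (S : Finset (Fin N)) (v : Fin N → ℝ) :
    (∑ j, (restrictVec S v j) ^ 2) + (∑ j, (restrictVec Sᶜ v j) ^ 2) = ∑ j, (v j) ^ 2 := by
  rw [← Finset.sum_add_distrib]
  apply Finset.sum_congr rfl
  intro j _
  by_cases h : j ∈ S <;> simp [restrictVec, h]

lemma l1Norm_restrict {N : ℕ} (S : Finset (Fin N)) (v : Fin N → ℝ) :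
    l1Norm (restrictVec S v) = ∑ i ∈ S, |v i| := by
  unfold l1Norm restrictVec
  rw [show (fun j => |if j ∈ S then v j else 0|) = fun j => if j ∈ S then |v j| else 0 by
    funext j; by_cases h : j ∈ S <;> simp [h]]
  rw [Finset.sum_ite_mem, Finset.univ_inter]

/-- existence of a set of `k` largest entries -/
lemma exists_top {N : ℕ} (f : Fin N → ℝ) : ∀ k : ℕ, k ≤ N →
    ∃ T : Finset (Fin N), T.card = k ∧ ∀ i ∈ T, ∀ j ∉ T, f j ≤ f i := by
  intro k
  induction k with
  | zero => intro _; exact ⟨∅, rfl, by simp⟩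
  | succ k ih =>
    intro hk
    obtain ⟨T, hTc, hTm⟩ := ih (Nat.le_of_succ_le hk)
    have hne : (Tᶜ : Finset (Fin N)).Nonempty := by
      rw [← Finset.card_pos, Finset.card_compl, hTc, Fintype.card_fin]
      omega
    obtain ⟨j₀, hj₀, hmax⟩ := Finset.exists_max_image Tᶜ f hne
    have hj₀T : j₀ ∉ T := Finset.mem_compl.mp hj₀
    refine ⟨insert j₀ T, by rw [Finset.card_insert_of_notMem hj₀T, hTc], ?_⟩
    intro i hi j hj
    have hjT : j ∉ T := fun h => hj (Finset.mem_insert_of_mem h)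
    rcases Finset.mem_insert.mp hi with rfl | hiT
    · exact hmax j (Finset.mem_compl.mpr hjT)
    · exact hTm i hiT j hjT

lemma sqrt_mul_le_aux (s τ L : ℝ) (hs : 0 < s) (hτ : 0 ≤ τ) (hL : 0 ≤ L) :
    Real.sqrt (τ * L) ≤ (s * τ + L) / (2 * Real.sqrt s) := by
  rw [le_div_iff₀ (by positivity)]
  have h1 : Real.sqrt (τ * L) = Real.sqrt τ * Real.sqrt L := Real.sqrt_mul hτ L
  have h2 : Real.sqrt s ^ 2 = s := Real.sq_sqrt hs.le
  have h3 : Real.sqrt τ ^ 2 = τ := Real.sq_sqrt hτ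
  have h4 : Real.sqrt L ^ 2 = L := Real.sq_sqrt hL
  nlinarith [sq_nonneg (Real.sqrt s * Real.sqrt τ - Real.sqrt L), Real.sqrt_nonneg s,
    Real.sqrt_nonneg τ, Real.sqrt_nonneg L]

lemma l2_le_sqrt {N : ℕ} (z : Fin N → ℝ) (τ : ℝ) (hbd : ∀ j, |z j| ≤ τ) :
    l2Norm z ≤ Real.sqrt (τ * l1Norm z) := by
  apply Real.sqrt_le_sqrt
  rw [l1Norm, Finset.mul_sum]
  apply Finset.sum_le_sum
  intro j _
  have : (z j) ^ 2 = |z j| * |z j| := by rw [← abs_mul, ← sq, abs_sq]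
  rw [this]
  exact mul_le_mul_of_nonneg_right (hbd j) (abs_nonneg _)

/-- sparse case of the key bound -/
lemma sparse_bound {N m : ℕ} (Φ : (Fin N → ℝ) →ₗ[ℝ] (Fin m → ℝ)) (p : ℝ)
    (s : ℕ) (hs : 0 < s) (C : ℝ) (hC : 0 ≤ C)
    (hRIP : ∀ z : Fin N → ℝ, {j | z j ≠ 0}.ncard ≤ s → lpNorm p (Φ z) ≤ C * l2Norm z)
    (z : Fin N → ℝ) (τ : ℝ) (hτ : 0 ≤ τ) (hbd : ∀ j, |z j| ≤ τ)
    (hsp : {j | z j ≠ 0}.ncard ≤ s) :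
    lpNorm p (Φ z) ≤ C / (2 * Real.sqrt s) * ((s : ℝ) * τ + l1Norm z) := by
  have hs' : (0 : ℝ) < s := by exact_mod_cast hs
  calc lpNorm p (Φ z) ≤ C * l2Norm z := hRIP z hsp
    _ ≤ C * Real.sqrt (τ * l1Norm z) :=
        mul_le_mul_of_nonneg_left (l2_le_sqrt z τ hbd) hC
    _ ≤ C * (((s : ℝ) * τ + l1Norm z) / (2 * Real.sqrt s)) :=
        mul_le_mul_of_nonneg_left
          (sqrt_mul_le_aux s τ (l1Norm z) hs' hτ (l1Norm_nonneg z)) hC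
    _ = C / (2 * Real.sqrt s) * ((s : ℝ) * τ + l1Norm z) := by ring

/-- the key bound: for any vector with entries bounded by τ, the image under Φ has
controlled ℓp norm. -/
lemma key_bound {N m : ℕ} (Φ : (Fin N → ℝ) →ₗ[ℝ] (Fin m → ℝ)) (p : ℝ)
    (s : ℕ) (hs : 0 < s) (hsN : s ≤ N) (C : ℝ) (hC : 0 ≤ C)
    (hRIP : ∀ z : Fin N → ℝ, {j | z j ≠ 0}.ncard ≤ s → lpNorm p (Φ z) ≤ C * l2Norm z)
    (hp : 1 ≤ p) :
    ∀ n : ℕ, ∀ z : Fin N → ℝ, ∀ τ : ℝ, 0 ≤ τ → (∀ j, |z j| ≤ τ) →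
      (Finset.univ.filter fun j => z j ≠ 0).card ≤ n →
      lpNorm p (Φ z) ≤ C / (2 * Real.sqrt s) * ((s : ℝ) * τ + 2 * l1Norm z) := by
  have hs' : (0 : ℝ) < s := by exact_mod_cast hs
  have hD : 0 ≤ C / (2 * Real.sqrt s) := by positivity
  have hncard : ∀ z : Fin N → ℝ,
      {j | z j ≠ 0}.ncard = (Finset.univ.filter fun j => z j ≠ 0).card := by
    intro z
    rw [show {j | z j ≠ 0} = ↑(Finset.univ.filter fun j => z j ≠ 0) by
      ext j; simp]
    exact Set.ncard_coe_finset _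
  intro n
  induction n with
  | zero =>
    intro z τ hτ hbd hcard
    have hsp : {j | z j ≠ 0}.ncard ≤ s := by rw [hncard]; omega
    have := sparse_bound Φ p s hs C hC hRIP z τ hτ hbd hsp
    have h2 : (s : ℝ) * τ + l1Norm z ≤ (s : ℝ) * τ + 2 * l1Norm z := by
      have := l1Norm_nonneg z; linarith
    calc lpNorm p (Φ z) ≤ C / (2 * Real.sqrt s) * ((s : ℝ) * τ + l1Norm z) := this
      _ ≤ _ := mul_le_mul_of_nonneg_left h2 hD
  | succ n ih =>
    intro z τ hτ hbd hcard
    by_cases hle : (Finset.univ.filter fun j => z j ≠ 0).card ≤ s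
    · -- sparse case
      have hsp : {j | z j ≠ 0}.ncard ≤ s := by rw [hncard]; omega
      have := sparse_bound Φ p s hs C hC hRIP z τ hτ hbd hsp
      have h2 : (s : ℝ) * τ + l1Norm z ≤ (s : ℝ) * τ + 2 * l1Norm z := by
        have := l1Norm_nonneg z; linarith
      calc lpNorm p (Φ z) ≤ C / (2 * Real.sqrt s) * ((s : ℝ) * τ + l1Norm z) := this
        _ ≤ _ := mul_le_mul_of_nonneg_left h2 hD
    · push_neg at hle
      obtain ⟨T, hTc, hTm⟩ := exists_top (fun j => |z j|) s hsN
      -- T consists of nonzero entries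
      have hTsub : T ⊆ Finset.univ.filter fun j => z j ≠ 0 := by
        intro i hi
        simp only [Finset.mem_filter, Finset.mem_univ, true_and]
        intro h0
        have hall : ∀ j, z j = 0 := by
          intro j
          by_cases hjT : j ∈ T
          · by_contra hne
            -- z j ≠ 0 but then |z i'| could be... use: if some entry of T is 0,
            -- all entries outside T are 0
            have h1 : ∀ j' ∉ T, z j' = 0 := by
              intro j' hj'
              have := hTm i hi j' hj'
              simp only [h0, abs_zero] at this
              exact abs_nonpos_iff.mp this
            -- support ⊆ T, contradiction with card
            have h2 : (Finset.univ.filter fun j => z j ≠ 0) ⊆ T := by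
              intro j'' hj''
              simp only [Finset.mem_filter, Finset.mem_univ, true_and] at hj''
              by_contra hj''T
              exact hj'' (h1 j'' hj''T)
            have := Finset.card_le_card h2
            omega
          · have := hTm i hi j hjT
            simp only [h0, abs_zero] at this
            exact abs_nonpos_iff.mp this
        -- then support is empty, contradiction
        have h2 : (Finset.univ.filter fun j => z j ≠ 0) = ∅ := by
          apply Finset.eq_empty_of_forall_notMem
          intro j hj
          simp only [Finset.mem_filter, Finset.mem_univ, true_and] at hj
          exact hj (hall j)
        rw [h2] at hle
        simp at hle
      set z1 := restrictVec T z with hz1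
      set z2 := restrictVec Tᶜ z with hz2
      have hsplit : z1 + z2 = z := restrict_add_compl T z
      have hL1 : l1Norm z1 = ∑ i ∈ T, |z i| := l1Norm_restrict T z
      have hL1sum : l1Norm z1 + l1Norm z2 = l1Norm z := l1Norm_split T z
      have hL1z1 : 0 ≤ l1Norm z1 := l1Norm_nonneg z1
      have hL1z2 : 0 ≤ l1Norm z2 := l1Norm_nonneg z2
      -- bound on z1 : sparse
      have hz1sp : {j | z1 j ≠ 0}.ncard ≤ s := by
        rw [hncard]
        have hsub : (Finset.univ.filter fun j => z1 j ≠ 0) ⊆ T := by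
          intro j hj
          simp only [Finset.mem_filter, Finset.mem_univ, true_and, hz1, restrictVec] at hj
          by_contra hjT
          simp [hjT] at hj
        calc _ ≤ T.card := Finset.card_le_card hsub
          _ = s := hTc
      have hbd1 : ∀ j, |z1 j| ≤ τ := by
        intro j
        simp only [hz1, restrictVec]
        by_cases h : j ∈ T
        · simpa [h] using hbd j
        · simpa [h] using hτ
      have hB1 : lpNorm p (Φ z1) ≤ C / (2 * Real.sqrt s) * ((s : ℝ) * τ + l1Norm z1) :=
        sparse_bound Φ p s hs C hC hRIP z1 τ hτ hbd1 hz1sp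
      -- bound on z2 via induction
      set τ' := (∑ i ∈ T, |z i|) / s with hτ'def
      have hτ'0 : 0 ≤ τ' := by
        apply div_nonneg _ hs'.le
        exact Finset.sum_nonneg fun _ _ => abs_nonneg _
      have hbd2 : ∀ j, |z2 j| ≤ τ' := by
        intro j
        by_cases h : j ∈ T
        · simpa [hz2, restrictVec, h] using hτ'0
        · have hze : z2 j = z j := by simp [hz2, restrictVec, h]
          simp only [hze]
          rw [hτ'def, le_div_iff₀ hs']
          have : ∀ i ∈ T, |z j| ≤ |z i| := fun i hi => hTm i hi j h
          calc |z j| * s = ∑ _i ∈ T, |z j| := by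
                rw [Finset.sum_const, hTc, nsmul_eq_mul, mul_comm]
            _ ≤ ∑ i ∈ T, |z i| := Finset.sum_le_sum this
      have hsτ' : (s : ℝ) * τ' = ∑ i ∈ T, |z i| := by
        rw [hτ'def, mul_div_cancel₀ _ (ne_of_gt hs')]
      have hcard2 : (Finset.univ.filter fun j => z2 j ≠ 0).card ≤ n := by
        have hsub : (Finset.univ.filter fun j => z2 j ≠ 0) ⊆
            (Finset.univ.filter fun j => z j ≠ 0) \ T := by
          intro j hj
          simp only [Finset.mem_filter, Finset.mem_univ, true_and, hz2, restrictVec,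
            Finset.mem_compl] at hj
          rw [Finset.mem_sdiff]
          by_cases h : j ∈ T
          · simp [h] at hj
          · simp only [Finset.mem_filter, Finset.mem_univ, true_and]
            constructor
            · simpa [h] using hj
            · exact h
        have h1 := Finset.card_le_card hsub
        have h2 : ((Finset.univ.filter fun j => z j ≠ 0) \ T).card =
            (Finset.univ.filter fun j => z j ≠ 0).card - T.card :=
          Finset.card_sdiff_of_subset hTsub
        omega
      have hB2 := ih z2 τ' hτ'0 hbd2 hcard2
      rw [hsτ', ← hL1] at hB2
      -- combine
      have htri : lpNorm p (Φ z) ≤ lpNorm p (Φ z1) + lpNorm p (Φ z2) := by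
        rw [← hsplit, map_add]
        exact lpNorm_add_le hp _ _
      have heq : C / (2 * Real.sqrt s) * ((s : ℝ) * τ + l1Norm z1) +
          C / (2 * Real.sqrt s) * (l1Norm z1 + 2 * l1Norm z2) =
          C / (2 * Real.sqrt s) * ((s : ℝ) * τ + 2 * l1Norm z) := by
        rw [← hL1sum]; ring
      linarith

set_option maxHeartbeats 1000000 in
/-- The key estimates in the proof of Theorem 3: if Φ satisfies the upper RIP_{p,2}
inequality and x violates the robust width conclusion while ‖Φx‖_{ℓp} is small, then
‖x‖₂ < (3/2)‖x_S‖₂ and ‖Φ x_S‖_{ℓp} < (1 − δ)μ‖x_S‖₂. -/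
theorem rip_rwp_key_estimates
    {N m : ℕ} (Φ : (Fin N → ℝ) →ₗ[ℝ] (Fin m → ℝ))
    (p : ℝ) (hp : 1 ≤ p)
    (s : ℕ) (hs : 0 < s) (hsN : s ≤ N)
    (μ δ : ℝ) (hμ : 0 < μ) (hδ0 : 0 ≤ δ) (hδ : δ < 1 / 3)
    (hRIPupper : ∀ z : Fin N → ℝ, {j | z j ≠ 0}.ncard ≤ s →
      lpNorm p (Φ z) ≤ μ * (1 + δ) * l2Norm z)
    (x : Fin N → ℝ)
    (hΦx : lpNorm p (Φ x) < (1 / 3 - δ) * μ * l2Norm x)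
    (hx : l2Norm x > (3 / Real.sqrt s) * l1Norm x)
    (S : Finset (Fin N)) (hScard : S.card = s)
    (hSmax : ∀ i ∈ S, ∀ j ∉ S, |x j| ≤ |x i|) :
    l2Norm x < (3 / 2) * l2Norm (restrictVec S x) ∧
    lpNorm p (Φ (restrictVec S x)) < (1 - δ) * μ * l2Norm (restrictVec S x) := by
  have hs' : (0 : ℝ) < s := by exact_mod_cast hs
  have hsq : (0 : ℝ) < Real.sqrt s := Real.sqrt_pos.mpr hs'
  have hl1nn : 0 ≤ l1Norm x := l1Norm_nonneg x
  have hxpos : 0 < l2Norm x := lt_of_le_of_lt (by positivity) hx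
  have hl1 : l1Norm x / Real.sqrt s < l2Norm x / 3 := by
    rw [div_lt_div_iff₀ hsq (by norm_num)]
    calc l1Norm x * 3 = 3 / Real.sqrt s * l1Norm x * Real.sqrt s := by
          field_simp
      _ < l2Norm x * Real.sqrt s := by
          exact mul_lt_mul_of_pos_right hx hsq
  set z := restrictVec Sᶜ x with hzdef
  set xS := restrictVec S x with hxSdef
  -- bound on ℓ2 norm of z
  have hzbd : ∀ j, (z j) ^ 2 ≤ (l1Norm x / s) * |z j| := by
    intro j
    by_cases h : j ∈ S
    · simp [hzdef, restrictVec, h]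
    · have h1 : z j = x j := by simp [hzdef, restrictVec, h]
      have h2 : |x j| * s ≤ l1Norm x := by
        have h3 : ∀ i ∈ S, |x j| ≤ |x i| := fun i hi => hSmax i hi j h
        calc |x j| * s = ∑ _i ∈ S, |x j| := by
              rw [Finset.sum_const, hScard, nsmul_eq_mul, mul_comm]
          _ ≤ ∑ i ∈ S, |x i| := Finset.sum_le_sum h3
          _ ≤ ∑ i, |x i| := Finset.sum_le_sum_of_subset_of_nonneg
              (Finset.subset_univ S) (fun _ _ _ => abs_nonneg _)
          _ = l1Norm x := rfl
      rw [h1]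
      have h4 : |x j| ≤ l1Norm x / s := by rw [le_div_iff₀ hs']; exact h2
      calc (x j) ^ 2 = |x j| * |x j| := by rw [← abs_mul, ← sq, abs_sq]
        _ ≤ (l1Norm x / s) * |x j| := mul_le_mul_of_nonneg_right h4 (abs_nonneg _)
  have hzl1 : l1Norm z ≤ l1Norm x := by
    apply Finset.sum_le_sum
    intro j _
    by_cases h : j ∈ S <;> simp [hzdef, restrictVec, h, abs_nonneg]
  have hzsq : (∑ j, (z j) ^ 2) ≤ (l1Norm x) ^ 2 / s := by
    calc (∑ j, (z j) ^ 2) ≤ ∑ j, (l1Norm x / s) * |z j| :=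
          Finset.sum_le_sum fun j _ => hzbd j
      _ = (l1Norm x / s) * l1Norm z := by rw [← Finset.mul_sum]; rfl
      _ ≤ (l1Norm x / s) * l1Norm x := by
          apply mul_le_mul_of_nonneg_left hzl1 (by positivity)
      _ = (l1Norm x) ^ 2 / s := by ring
  have hzl2 : l2Norm z ≤ l1Norm x / Real.sqrt s := by
    rw [l2Norm]
    calc Real.sqrt (∑ j, (z j) ^ 2) ≤ Real.sqrt ((l1Norm x) ^ 2 / s) :=
          Real.sqrt_le_sqrt hzsq
      _ = l1Norm x / Real.sqrt s := by
          rw [show (l1Norm x) ^ 2 / (s : ℝ) = (l1Norm x / Real.sqrt s) ^ 2 by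
            rw [div_pow, Real.sq_sqrt hs'.le]]
          exact Real.sqrt_sq (by positivity)
  have hzlt : l2Norm z < l2Norm x / 3 := lt_of_le_of_lt hzl2 hl1
  -- split of ℓ2 norms
  have hsplitsq : l2Norm xS ^ 2 + l2Norm z ^ 2 = l2Norm x ^ 2 := by
    rw [l2Norm, l2Norm, l2Norm, Real.sq_sqrt (Finset.sum_nonneg fun _ _ => sq_nonneg _),
      Real.sq_sqrt (Finset.sum_nonneg fun _ _ => sq_nonneg _),
      Real.sq_sqrt (Finset.sum_nonneg fun _ _ => sq_nonneg _)]
    exact l2sq_split S x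
  have hxSnn : 0 ≤ l2Norm xS := l2Norm_nonneg xS
  have hznn : 0 ≤ l2Norm z := l2Norm_nonneg z
  -- Part A
  have hzsq' : l2Norm z ^ 2 < (l2Norm x / 3) ^ 2 :=
    pow_lt_pow_left₀ hzlt hznn two_ne_zero
  have hA : l2Norm x < (3 / 2) * l2Norm xS := by
    nlinarith [hsplitsq, hzsq', hxpos, hxSnn, sq_nonneg (l2Norm x - (3/2) * l2Norm xS)]
  refine ⟨hA, ?_⟩
  -- Part B
  set C := μ * (1 + δ) with hCdef
  have hCpos : 0 < C := by positivity
  have hSne : S.Nonempty := Finset.card_pos.mp (by omega)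
  set τ := S.inf' hSne (fun i => |x i|) with hτdef
  have hτ0 : 0 ≤ τ := Finset.le_inf' hSne _ fun i _ => abs_nonneg _
  have hbd : ∀ j, |z j| ≤ τ := by
    intro j
    by_cases h : j ∈ S
    · simp only [hzdef, restrictVec, Finset.mem_compl, h, not_true_eq_false, if_false]
      simpa using hτ0
    · have h1 : z j = x j := by simp [hzdef, restrictVec, h]
      rw [h1]
      exact Finset.le_inf' hSne _ fun i hi => hSmax i hi j h
  have hsτ : (s : ℝ) * τ ≤ ∑ i ∈ S, |x i| := by
    calc (s : ℝ) * τ = ∑ _i ∈ S, τ := by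
          rw [Finset.sum_const, hScard, nsmul_eq_mul]
      _ ≤ ∑ i ∈ S, |x i| := Finset.sum_le_sum fun i hi => Finset.inf'_le _ hi
  have hcardN : (Finset.univ.filter fun j => z j ≠ 0).card ≤ N := by
    calc _ ≤ Finset.univ.card := Finset.card_filter_le _ _
      _ = N := Finset.card_fin N
  have hB := key_bound Φ p s hs hsN C hCpos.le hRIPupper hp N z τ hτ0 hbd hcardN
  have hL1S : l1Norm xS = ∑ i ∈ S, |x i| := l1Norm_restrict S x
  have hL1split : l1Norm xS + l1Norm z = l1Norm x := l1Norm_split S x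
  have hzl1nn : 0 ≤ l1Norm z := l1Norm_nonneg z
  have hB2 : lpNorm p (Φ z) ≤ C * (l1Norm x / Real.sqrt s) := by
    have h1 : (s : ℝ) * τ + 2 * l1Norm z ≤ 2 * l1Norm x := by
      have := hsτ
      rw [← hL1S] at this
      linarith
    have hD : 0 ≤ C / (2 * Real.sqrt s) := by positivity
    calc lpNorm p (Φ z) ≤ C / (2 * Real.sqrt s) * ((s : ℝ) * τ + 2 * l1Norm z) := hB
      _ ≤ C / (2 * Real.sqrt s) * (2 * l1Norm x) := mul_le_mul_of_nonneg_left h1 hD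
      _ = C * (l1Norm x / Real.sqrt s) := by field_simp
  have hB3 : lpNorm p (Φ z) < C * (l2Norm x / 3) :=
    lt_of_le_of_lt hB2 (mul_lt_mul_of_pos_left hl1 hCpos)
  -- triangle
  have hxdec : xS = x - z := by
    have := restrict_add_compl S x
    rw [← hxSdef, ← hzdef] at this
    funext j
    have := congrFun this j
    simp only [Pi.add_apply] at this
    simp [Pi.sub_apply, ← this]
  have htri : lpNorm p (Φ xS) ≤ lpNorm p (Φ x) + lpNorm p (Φ z) := by
    rw [hxdec, map_sub]
    exact lpNorm_sub_le hp _ _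
  have hcoef : 0 < (1 - δ) * μ := by nlinarith
  have hfin : (1 - δ) * μ * l2Norm x < (1 - δ) * μ * ((3 / 2) * l2Norm xS) :=
    mul_lt_mul_of_pos_left hA hcoef
  nlinarith [htri, hΦx, hB3, hfin, hxpos]
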